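/- Suppose φ = β_l ∘ α_l ∘ ⋯ ∘ β₁ ∘ α₁ ∈ Aut(A²) is such that β_i ∈ J \ Aff for 1 ≤ i ≤ l, α_i ∈ Aff \ J for 2 ≤ i ≤ l, and α₁ ∈ Aff. Then bideg φ = (∏_{i=1}^{l} deg β_i, ∏_{i=1}^{l−1} deg β_i). -/

import Mathlib

open MvPolynomial

variable {k : Type*} [Field k]

/-- The subgroup `Aff` of affine automorphisms: both components have degree `1`. -/
def IsAff (φ : MvPolynomial (Fin 2) k ≃ₐ[k] MvPolynomial (Fin 2) k) : Prop :=
  (φ (X 0)).totalDegree = 1 ∧ (φ (X 1)).totalDegree = 1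

/-- The de Jonquières subgroup `J`: automorphisms of the form
`(a x + P(y), b y + c)` with `a, b ∈ kˣ`, `c ∈ k`, `P ∈ k[y]`. -/
def IsJonq (φ : MvPolynomial (Fin 2) k ≃ₐ[k] MvPolynomial (Fin 2) k) : Prop :=
  ∃ (a b : kˣ) (c : k) (P : Polynomial k),
    φ (X 0) = C (a : k) * X 0 + Polynomial.aeval (X 1) P ∧
      φ (X 1) = C (b : k) * X 1 + C c


section DegLemmas

open Finset

variable {σ R : Type*} [CommRing R] [IsDomain R]

theorem hc_mul {p q : MvPolynomial σ R} {m n : ℕ} (hp : p.totalDegree ≤ m)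
    (hq : q.totalDegree ≤ n) :
    homogeneousComponent (m + n) (p * q) =
      homogeneousComponent m p * homogeneousComponent n q := by
  have hps : ∑ i ∈ range (m + 1), homogeneousComponent i p = p :=
    (Finset.sum_subset (Finset.range_subset_range.mpr (Nat.succ_le_succ hp))
      (fun i _ hi => homogeneousComponent_eq_zero _ p (by
        simp only [mem_range, not_lt] at hi
        omega))).symm.trans (sum_homogeneousComponent p)
  have hqs : ∑ j ∈ range (n + 1), homogeneousComponent j q = q :=
    (Finset.sum_subset (Finset.range_subset_range.mpr (Nat.succ_le_succ hq))
      (fun j _ hj => homogeneousComponent_eq_zero _ q (by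
        simp only [mem_range, not_lt] at hj
        omega))).symm.trans (sum_homogeneousComponent q)
  conv_lhs => rw [← hps, ← hqs]
  rw [Finset.sum_mul_sum, map_sum]
  rw [Finset.sum_eq_single m ?_ ?_]
  · rw [map_sum, Finset.sum_eq_single n ?_ ?_]
    · exact homogeneousComponent_of_mem (by
        simpa [mem_homogeneousSubmodule] using
          (homogeneousComponent_isHomogeneous m p).mul
            (homogeneousComponent_isHomogeneous n q)) |>.trans (by simp)
    · intro j hj hjn
      rw [homogeneousComponent_of_mem (by
        simpa [mem_homogeneousSubmodule] using
          (homogeneousComponent_isHomogeneous m p).mul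
            (homogeneousComponent_isHomogeneous j q))]
      simp only [mem_range] at hj
      rw [if_neg (by omega)]
    · intro h; exact absurd (self_mem_range_succ n) h
  · intro i hi him
    rw [map_sum, Finset.sum_eq_zero]
    intro j hj
    rw [homogeneousComponent_of_mem (by
      simpa [mem_homogeneousSubmodule] using
        (homogeneousComponent_isHomogeneous i p).mul
          (homogeneousComponent_isHomogeneous j q))]
    simp only [mem_range] at hi hj
    rw [if_neg (by omega)]
  · intro h; exact absurd (self_mem_range_succ m) h

omit [IsDomain R] in
theorem hc_top_ne_zero {p : MvPolynomial σ R} (hp : p ≠ 0) :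
    homogeneousComponent p.totalDegree p ≠ 0 := by
  obtain ⟨d, hd, hsum⟩ : ∃ d ∈ p.support, p.totalDegree = d.sum (fun _ e => e) :=
    Finset.exists_mem_eq_sup _ (support_nonempty.mpr hp) _
  intro h
  have h2 := coeff_homogeneousComponent (n := p.totalDegree) (φ := p) d
  rw [h] at h2
  simp only [coeff_zero] at h2
  rw [if_pos (by rw [Finsupp.degree, hsum]; rfl)] at h2
  exact (mem_support_iff.mp hd) h2.symm

theorem totalDegree_mul_eq {p q : MvPolynomial σ R} (hp : p ≠ 0) (hq : q ≠ 0) :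
    (p * q).totalDegree = p.totalDegree + q.totalDegree := by
  refine le_antisymm (totalDegree_mul p q) ?_
  have h := hc_mul (le_refl p.totalDegree) (le_refl q.totalDegree)
  have hne : homogeneousComponent (p.totalDegree + q.totalDegree) (p * q) ≠ 0 := by
    rw [h]
    exact mul_ne_zero (hc_top_ne_zero hp) (hc_top_ne_zero hq)
  by_contra hlt
  exact hne (homogeneousComponent_eq_zero _ _ (by omega))

theorem totalDegree_pow_eq {q : MvPolynomial σ R} (hq : q ≠ 0) (j : ℕ) :
    (q ^ j).totalDegree = j * q.totalDegree := by
  induction j with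
  | zero => simp
  | succ j ih =>
    rw [pow_succ, totalDegree_mul_eq (pow_ne_zero _ hq) hq, ih]
    ring

theorem totalDegree_C_mul_eq {c : R} (hc : c ≠ 0) (p : MvPolynomial σ R) :
    (C c * p).totalDegree = p.totalDegree := by
  rcases eq_or_ne p 0 with rfl | hp
  · simp
  · rw [totalDegree_mul_eq (fun h => hc (by simpa using h)) hp, totalDegree_C, zero_add]

theorem totalDegree_polyAeval (P : Polynomial R) {q : MvPolynomial σ R}
    (hq : q.totalDegree ≠ 0) :
    (Polynomial.aeval q P).totalDegree = P.natDegree * q.totalDegree := by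
  have hq0 : q ≠ 0 := fun h => hq (by simp [h])
  rcases Nat.eq_zero_or_pos P.natDegree with hn | hn
  · obtain ⟨c, rfl⟩ := Polynomial.natDegree_eq_zero.mp hn
    simp [algebraMap_eq]
  · have hP : P ≠ 0 := fun h => by simp [h] at hn
    have hlead : P.coeff P.natDegree ≠ 0 := Polynomial.leadingCoeff_ne_zero.mpr hP
    rw [Polynomial.aeval_eq_sum_range, Finset.sum_range_succ]
    have htop : (P.coeff P.natDegree • q ^ P.natDegree).totalDegree
        = P.natDegree * q.totalDegree := by
      rw [smul_eq_C_mul, totalDegree_C_mul_eq hlead, totalDegree_pow_eq hq0]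
    have hrest : (∑ i ∈ Finset.range P.natDegree, P.coeff i • q ^ i).totalDegree
        < P.natDegree * q.totalDegree := by
      refine lt_of_le_of_lt (totalDegree_finset_sum _ _) ?_
      rw [Finset.sup_lt_iff (by positivity)]
      intro i hi
      simp only [Finset.mem_range] at hi
      refine lt_of_le_of_lt ((totalDegree_smul_le _ _).trans (totalDegree_pow _ _)) ?_
      exact (Nat.mul_lt_mul_right (Nat.pos_of_ne_zero hq)).mpr hi
    rw [totalDegree_add_eq_right_of_totalDegree_lt (htop ▸ hrest), htop]

end DegLemmas

section Plane

variable {k : Type*} [Field k]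

local notation "Pl" => MvPolynomial (Fin 2) k

theorem algEquiv_C (ψ : Pl ≃ₐ[k] Pl) (c : k) : ψ (C c) = C c := by
  have := ψ.commutes c
  rwa [algebraMap_eq] at this

theorem mon_classify (d : Fin 2 →₀ ℕ) (hd : (d.sum fun _ e => e) ≤ 1) :
    d = 0 ∨ d = Finsupp.single 0 1 ∨ d = Finsupp.single 1 1 := by
  have h2 : d 0 + d 1 ≤ 1 := by
    rw [Finsupp.sum_fintype _ _ (fun _ => rfl)] at hd
    simpa [Fin.sum_univ_two] using hd
  rcases Nat.le_one_iff_eq_zero_or_eq_one.mp (le_trans (Nat.le_add_right _ _) h2) with h0 | h0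
  · rcases Nat.le_one_iff_eq_zero_or_eq_one.mp (le_trans (Nat.le_add_left _ _) h2) with h1 | h1
    · left; ext i; fin_cases i <;> simp [h0, h1]
    · right; right; ext i; fin_cases i <;> simp [h0, h1, Finsupp.single_apply]
  · right; left
    have h1 : d 1 = 0 := by omega
    ext i; fin_cases i <;> simp [h0, h1, Finsupp.single_apply]

theorem s01_ne_s11 : (Finsupp.single 0 1 : Fin 2 →₀ ℕ) ≠ Finsupp.single 1 1 := by
  intro h
  have := DFunLike.congr_fun h 0
  simp [Finsupp.single_apply] at this

theorem s01_ne_zero : (Finsupp.single 0 1 : Fin 2 →₀ ℕ) ≠ 0 :=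
  fun h => one_ne_zero (Finsupp.single_eq_zero.mp h)

theorem s11_ne_zero : (Finsupp.single 1 1 : Fin 2 →₀ ℕ) ≠ 0 :=
  fun h => one_ne_zero (Finsupp.single_eq_zero.mp h)

theorem eq_affine_form {p : Pl} (h : p.totalDegree ≤ 1) :
    p = C (coeff (Finsupp.single 0 1) p) * X 0 + C (coeff (Finsupp.single 1 1) p) * X 1 +
      C (coeff 0 p) := by
  apply MvPolynomial.ext
  intro m
  simp only [coeff_add, coeff_C_mul, coeff_X', coeff_C]
  by_cases hm0 : m = 0
  · subst hm0
    rw [if_neg s01_ne_zero, if_neg s11_ne_zero, if_pos rfl]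
    ring
  by_cases hm1 : m = Finsupp.single 0 1
  · subst hm1
    rw [if_neg s01_ne_s11.symm, if_neg (Ne.symm s01_ne_zero)]
    simp
  by_cases hm2 : m = Finsupp.single 1 1
  · subst hm2
    rw [if_neg s01_ne_s11, if_neg (Ne.symm s11_ne_zero)]
    simp
  · rw [if_neg (fun h' => hm1 h'.symm), if_neg (fun h' => hm2 h'.symm),
      if_neg (fun h' => hm0 h'.symm)]
    have hns : m ∉ p.support := by
      intro hmem
      rcases mon_classify m (le_trans (le_totalDegree hmem) h) with h' | h' | h' <;>
        [exact hm0 h'; exact hm1 h'; exact hm2 h']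
    rw [notMem_support_iff.mp hns]
    ring

theorem coeff_s01_aeval (P : Polynomial k) :
    coeff (Finsupp.single 0 1) (Polynomial.aeval (X 1 : Pl) P) = 0 := by
  rw [Polynomial.aeval_eq_sum_range, coeff_sum]
  apply Finset.sum_eq_zero
  intro i _
  rw [coeff_smul, X_pow_eq_monomial, coeff_monomial, if_neg, smul_zero]
  intro h
  have := DFunLike.congr_fun h 0
  simp [Finsupp.single_apply] at this

theorem sum_s01 : ((Finsupp.single 0 1 : Fin 2 →₀ ℕ).sum fun _ e => e) = 1 := by
  simp

end Plane

section Plane2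

variable {k : Type*} [Field k]

local notation "Pl" => MvPolynomial (Fin 2) k

theorem deg_comb_le {F G : Pl} {D : ℕ} (hF : F.totalDegree ≤ D) (hG : G.totalDegree ≤ D)
    (s t u : k) (hD : 0 < D) :
    (C s * F + C t * G + C u).totalDegree ≤ D := by
  refine le_trans (totalDegree_add _ _) (max_le (le_trans (totalDegree_add _ _) (max_le ?_ ?_)) ?_)
  · exact le_trans (totalDegree_mul _ _) (by simpa using hF)
  · exact le_trans (totalDegree_mul _ _) (by simpa using hG)
  · simp [totalDegree_C]

theorem deg_comb_eq {F G : Pl} {s : k} (hs : s ≠ 0) (t u : k)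
    (hlt : G.totalDegree < F.totalDegree) :
    (C s * F + C t * G + C u).totalDegree = F.totalDegree := by
  have h1 : (C s * F).totalDegree = F.totalDegree := totalDegree_C_mul_eq hs F
  have h2 : (C s * F + C t * G).totalDegree = F.totalDegree := by
    rw [totalDegree_add_eq_left_of_totalDegree_lt, h1]
    rw [h1]
    exact lt_of_le_of_lt (le_trans (totalDegree_mul _ _) (by simpa using le_refl _)) hlt
  rw [totalDegree_add_eq_left_of_totalDegree_lt, h2]
  rw [h2]
  exact lt_of_le_of_lt (by simp [totalDegree_C]) (lt_of_le_of_lt (Nat.zero_le _) hlt)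

/-- Facts about a non-affine de Jonquières automorphism. -/
theorem jonq_facts {b : Pl ≃ₐ[k] Pl} {α β : kˣ} {γ : k} {P : Polynomial k}
    (hb0 : b (X 0) = C (α : k) * X 0 + Polynomial.aeval (X 1) P)
    (hb1 : b (X 1) = C (β : k) * X 1 + C γ)
    (hbnA : ¬ IsAff b) :
    2 ≤ P.natDegree ∧ (b (X 0)).totalDegree = P.natDegree := by
  have hX1 : (totalDegree (X 1 : Pl)) = 1 := totalDegree_X 1
  have hdeg1 : (b (X 1)).totalDegree = 1 := by
    rw [hb1, totalDegree_add_eq_left_of_totalDegree_lt, totalDegree_C_mul_eq β.ne_zero, hX1]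
    rw [totalDegree_C_mul_eq β.ne_zero, hX1]
    simp [totalDegree_C]
  have hAe : (Polynomial.aeval (X 1 : Pl) P).totalDegree = P.natDegree := by
    rw [totalDegree_polyAeval P (by rw [hX1]; exact one_ne_zero), hX1, mul_one]
  have hCX : (C (α : k) * X 0 : Pl).totalDegree = 1 := by
    rw [totalDegree_C_mul_eq α.ne_zero, totalDegree_X]
  rcases le_or_gt P.natDegree 1 with hn | hn
  · exfalso
    apply hbnA
    refine ⟨le_antisymm ?_ ?_, hdeg1⟩
    · rw [hb0]
      exact le_trans (totalDegree_add _ _) (max_le (le_of_eq hCX) (hAe ▸ hn))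
    · have hc : coeff (Finsupp.single 0 1) (b (X 0)) = (α : k) := by
        rw [hb0, coeff_add, coeff_s01_aeval, add_zero, coeff_C_mul, coeff_X, if_pos rfl, mul_one]
      have hmem : Finsupp.single 0 1 ∈ (b (X 0)).support :=
        mem_support_iff.mpr (hc ▸ α.ne_zero)
      simpa [sum_s01] using le_totalDegree hmem
  · constructor
    · omega
    · rw [hb0, totalDegree_add_eq_right_of_totalDegree_lt, hAe]
      rw [hAe, hCX]
      exact hn

/-- An affine automorphism outside `J` has a nonzero `x`-coefficient in its second
component. -/
theorem aff_not_jonq {a : Pl ≃ₐ[k] Pl} (hA : IsAff a) (hnJ : ¬ IsJonq a) :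
    coeff (Finsupp.single 0 1) (a (X 1)) ≠ 0 := by
  intro hs
  apply hnJ
  have A1 : a (X 1) = C (coeff (Finsupp.single 1 1) (a (X 1))) * X 1 +
      C (coeff 0 (a (X 1))) := by
    have := eq_affine_form (p := a (X 1)) hA.2.le
    rwa [hs, map_zero, zero_mul, zero_add] at this
  set t := coeff (Finsupp.single 1 1) (a (X 1)) with ht_def
  set u := coeff 0 (a (X 1)) with hu_def
  have A0 := eq_affine_form (p := a (X 0)) hA.1.le
  set p := coeff (Finsupp.single 0 1) (a (X 0)) with hp_def
  set q := coeff (Finsupp.single 1 1) (a (X 0)) with hq_def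
  set r := coeff 0 (a (X 0)) with hr_def
  have ht : t ≠ 0 := by
    intro ht0
    rw [ht0, map_zero, zero_mul, zero_add] at A1
    have : a (X 1) = a (C u) := by rw [A1, algEquiv_C]
    have hXC : (X 1 : Pl) = C u := a.injective this
    have := congrArg (coeff (Finsupp.single 1 1)) hXC
    rw [coeff_X, coeff_C, if_neg (Ne.symm s11_ne_zero)] at this
    simp at this
  have hp : p ≠ 0 := by
    intro hp0
    rw [hp0, map_zero, zero_mul, zero_add] at A0
    have hconst : a (C t * X 0 - C q * X 1) = C (t * r - q * u) := by
      rw [map_sub, map_mul, map_mul, algEquiv_C, algEquiv_C, A0, A1, C_sub, C_mul, C_mul]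
      ring
    have : C t * X 0 - C q * X 1 = (C (t * r - q * u) : Pl) := by
      rw [← algEquiv_C a (t * r - q * u)] at hconst
      exact a.injective hconst
    have := congrArg (coeff (Finsupp.single 0 1)) this
    rw [coeff_sub, coeff_C_mul, coeff_C_mul, coeff_X, coeff_C,
      if_neg (Ne.symm s01_ne_zero), coeff_X', if_neg s01_ne_s11.symm] at this
    simp at this
    exact ht this
  refine ⟨Units.mk0 p hp, Units.mk0 t ht, u, Polynomial.C q * Polynomial.X + Polynomial.C r,
    ?_, ?_⟩
  · rw [A0]
    have : Polynomial.aeval (X 1 : Pl) (Polynomial.C q * Polynomial.X + Polynomial.C r) =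
        C q * X 1 + C r := by
      simp [algebraMap_eq]
    rw [this]
    simp [Units.val_mk0]
    ring
  · rw [A1]
    simp [Units.val_mk0]

end Plane2

theorem filter_prod_castSucc (m : ℕ) (d : Fin (m + 1) → ℕ) (hd : 0 < d (Fin.last m)) :
    ∏ i ∈ Finset.univ.filter (fun i : Fin (m + 1) => (i : ℕ) + 1 < m + 1), d i
      = ∏ i : Fin m, d i.castSucc := by
  have hfe : Finset.univ.filter (fun i : Fin (m + 1) => (i : ℕ) + 1 < m + 1)
      = Finset.univ.erase (Fin.last m) := by
    ext i
    have h2 : (i : ℕ) < m + 1 := i.isLt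
    simp only [Finset.mem_filter, Finset.mem_erase, Finset.mem_univ, true_and, and_true]
    rw [Ne, Fin.ext_iff, Fin.val_last]
    omega
  have h1 := Finset.prod_erase_mul Finset.univ d (Finset.mem_univ (Fin.last m))
  rw [Fin.prod_univ_castSucc] at h1
  rw [hfe]
  exact Nat.eq_of_mul_eq_mul_right hd h1

section Main

variable {k : Type*} [Field k]

local notation "Pl" => MvPolynomial (Fin 2) k

theorem hcomm (ψ : Pl ≃ₐ[k] Pl) (q : Pl) (P : Polynomial k) :
    ψ (Polynomial.aeval q P) = Polynomial.aeval (ψ q) P :=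
  (Polynomial.aeval_algHom_apply ψ q P).symm

theorem key : ∀ l : ℕ, 1 ≤ l → ∀ (a b : Fin l → (Pl ≃ₐ[k] Pl)),
    (∀ i, IsJonq (b i)) → (∀ i, ¬ IsAff (b i)) → (∀ i, IsAff (a i)) →
    (∀ i : Fin l, 1 ≤ (i : ℕ) → ¬ IsJonq (a i)) →
    (((List.ofFn fun i => a i * b i).prod (X 0)).totalDegree
        = ∏ i, (b i (X 0)).totalDegree ∧
      ((List.ofFn fun i => a i * b i).prod (X 1)).totalDegree
        = ∏ i ∈ Finset.univ.filter (fun i : Fin l => (i : ℕ) + 1 < l),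
            (b i (X 0)).totalDegree ∧
      ((List.ofFn fun i => a i * b i).prod (X 1)).totalDegree
        < ((List.ofFn fun i => a i * b i).prod (X 0)).totalDegree) := by
  intro l hl
  induction l, hl using Nat.le_induction with
  | base =>
    intro a b hbJ hbnA haA _hanJ
    have hψ : (List.ofFn fun i : Fin 1 => a i * b i).prod = a 0 * b 0 := by simp
    obtain ⟨α, β, γ, P, hb0, hb1⟩ := hbJ 0
    obtain ⟨hn2, hdegb⟩ := jonq_facts hb0 hb1 (hbnA 0)
    have D1 : ((a 0) (X 1)).totalDegree = 1 := (haA 0).2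
    have E0 : (List.ofFn fun i : Fin 1 => a i * b i).prod (X 0)
        = C (α : k) * (a 0 (X 0)) + Polynomial.aeval (a 0 (X 1)) P := by
      rw [hψ, AlgEquiv.mul_apply, hb0, map_add, map_mul, algEquiv_C, hcomm]
    have E1 : (List.ofFn fun i : Fin 1 => a i * b i).prod (X 1)
        = C (β : k) * (a 0 (X 1)) + C γ := by
      rw [hψ, AlgEquiv.mul_apply, hb1, map_add, map_mul, algEquiv_C, algEquiv_C]
    have hB : (Polynomial.aeval (a 0 (X 1)) P).totalDegree = P.natDegree := by
      rw [totalDegree_polyAeval P (by rw [D1]; exact one_ne_zero), D1, mul_one]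
    have hA : (C (α : k) * (a 0 (X 0))).totalDegree = 1 := by
      rw [totalDegree_C_mul_eq α.ne_zero, (haA 0).1]
    have hd0 : ((List.ofFn fun i : Fin 1 => a i * b i).prod (X 0)).totalDegree
        = P.natDegree := by
      rw [E0, totalDegree_add_eq_right_of_totalDegree_lt (by rw [hA, hB]; omega), hB]
    have hd1 : ((List.ofFn fun i : Fin 1 => a i * b i).prod (X 1)).totalDegree = 1 := by
      rw [E1, totalDegree_add_eq_left_of_totalDegree_lt, totalDegree_C_mul_eq β.ne_zero, D1]
      rw [totalDegree_C_mul_eq β.ne_zero, D1]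
      simp [totalDegree_C]
    have hfilter : Finset.univ.filter (fun i : Fin 1 => (i : ℕ) + 1 < 1) = ∅ :=
      Finset.filter_eq_empty_iff.mpr (fun {i} _ => by omega)
    refine ⟨?_, ?_, ?_⟩
    · rw [hd0, Fin.prod_univ_one, hdegb]
    · rw [hd1, hfilter, Finset.prod_empty]
    · rw [hd0, hd1]; omega
  | succ m hm ih =>
    intro a b hbJ hbnA haA hanJ
    obtain ⟨hF, hG, hlt⟩ := ih (fun i => a i.castSucc) (fun i => b i.castSucc)
      (fun i => hbJ _) (fun i => hbnA _) (fun i => haA _)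
      (fun i hi => hanJ i.castSucc (by simpa using hi))
    set ψ' : Pl ≃ₐ[k] Pl := (List.ofFn fun i : Fin m => a i.castSucc * b i.castSucc).prod
      with hψ'def
    have hsplit : (List.ofFn fun i : Fin (m + 1) => a i * b i).prod
        = ψ' * (a (Fin.last m) * b (Fin.last m)) := by
      rw [List.ofFn_succ']
      simp only [List.concat_eq_append, List.prod_append, List.prod_cons, List.prod_nil,
        mul_one, hψ'def]
    obtain ⟨α, β, γ, P, hb0, hb1⟩ := hbJ (Fin.last m)
    obtain ⟨hn2, hdegb⟩ := jonq_facts hb0 hb1 (hbnA (Fin.last m))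
    have hs : coeff (Finsupp.single 0 1) (a (Fin.last m) (X 1)) ≠ 0 :=
      aff_not_jonq (haA (Fin.last m)) (hanJ (Fin.last m) (by simpa using hm))
    have A1 := eq_affine_form (p := a (Fin.last m) (X 1)) (haA (Fin.last m)).2.le
    have A0 := eq_affine_form (p := a (Fin.last m) (X 0)) (haA (Fin.last m)).1.le
    have hDpos : 0 < (ψ' (X 0)).totalDegree := lt_of_le_of_lt (Nat.zero_le _) hlt
    have hH1expr : ψ' (a (Fin.last m) (X 1))
        = C (coeff (Finsupp.single 0 1) (a (Fin.last m) (X 1))) * ψ' (X 0)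
          + C (coeff (Finsupp.single 1 1) (a (Fin.last m) (X 1))) * ψ' (X 1)
          + C (coeff 0 (a (Fin.last m) (X 1))) := by
      conv_lhs => rw [A1]
      simp only [map_add, map_mul, algEquiv_C]
    have hH0expr : ψ' (a (Fin.last m) (X 0))
        = C (coeff (Finsupp.single 0 1) (a (Fin.last m) (X 0))) * ψ' (X 0)
          + C (coeff (Finsupp.single 1 1) (a (Fin.last m) (X 0))) * ψ' (X 1)
          + C (coeff 0 (a (Fin.last m) (X 0))) := by
      conv_lhs => rw [A0]
      simp only [map_add, map_mul, algEquiv_C]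
    have hH1 : (ψ' (a (Fin.last m) (X 1))).totalDegree = (ψ' (X 0)).totalDegree := by
      rw [hH1expr]
      exact deg_comb_eq hs _ _ hlt
    have hH0le : (ψ' (a (Fin.last m) (X 0))).totalDegree ≤ (ψ' (X 0)).totalDegree := by
      rw [hH0expr]
      exact deg_comb_le le_rfl hlt.le _ _ _ hDpos
    have E1 : (List.ofFn fun i : Fin (m + 1) => a i * b i).prod (X 1)
        = C (β : k) * (ψ' (a (Fin.last m) (X 1))) + C γ := by
      rw [hsplit, AlgEquiv.mul_apply, AlgEquiv.mul_apply, hb1,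
        map_add, map_mul, algEquiv_C, algEquiv_C, map_add, map_mul, algEquiv_C, algEquiv_C]
    have E0 : (List.ofFn fun i : Fin (m + 1) => a i * b i).prod (X 0)
        = C (α : k) * (ψ' (a (Fin.last m) (X 0)))
          + Polynomial.aeval (ψ' (a (Fin.last m) (X 1))) P := by
      rw [hsplit, AlgEquiv.mul_apply, AlgEquiv.mul_apply, hb0,
        map_add, map_mul, algEquiv_C, hcomm, map_add, map_mul, algEquiv_C, hcomm]
    have haev : (Polynomial.aeval (ψ' (a (Fin.last m) (X 1))) P).totalDegree
        = P.natDegree * (ψ' (X 0)).totalDegree := by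
      rw [totalDegree_polyAeval P (by rw [hH1]; omega), hH1]
    have hleft : (C (α : k) * (ψ' (a (Fin.last m) (X 0)))).totalDegree
        < P.natDegree * (ψ' (X 0)).totalDegree := by
      rw [totalDegree_C_mul_eq α.ne_zero]
      calc (ψ' (a (Fin.last m) (X 0))).totalDegree ≤ (ψ' (X 0)).totalDegree := hH0le
        _ < P.natDegree * (ψ' (X 0)).totalDegree := by
          have h1 : 1 * (ψ' (X 0)).totalDegree < P.natDegree * (ψ' (X 0)).totalDegree :=
            (Nat.mul_lt_mul_right hDpos).mpr (by omega)
          omega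
    have hd0 : ((List.ofFn fun i : Fin (m + 1) => a i * b i).prod (X 0)).totalDegree
        = P.natDegree * (ψ' (X 0)).totalDegree := by
      rw [E0, totalDegree_add_eq_right_of_totalDegree_lt (haev ▸ hleft), haev]
    have hd1 : ((List.ofFn fun i : Fin (m + 1) => a i * b i).prod (X 1)).totalDegree
        = (ψ' (X 0)).totalDegree := by
      rw [E1, totalDegree_add_eq_left_of_totalDegree_lt, totalDegree_C_mul_eq β.ne_zero, hH1]
      rw [totalDegree_C_mul_eq β.ne_zero, hH1, totalDegree_C]
      omega
    have hdpos' : 0 < (b (Fin.last m) (X 0)).totalDegree := by rw [hdegb]; omega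
    refine ⟨?_, ?_, ?_⟩
    · rw [hd0, Fin.prod_univ_castSucc, ← hF, hdegb, mul_comm]
    · rw [hd1, filter_prod_castSucc _ _ hdpos', ← hF]
    · rw [hd0, hd1]
      have h1 : 1 * (ψ' (X 0)).totalDegree < P.natDegree * (ψ' (X 0)).totalDegree :=
        (Nat.mul_lt_mul_right hDpos).mpr (by omega)
      omega

end Main

/-- The degree of a polynomial automorphism: the maximum of the total degrees of its two
components. -/
noncomputable def adeg (φ : MvPolynomial (Fin 2) k ≃ₐ[k] MvPolynomial (Fin 2) k) : ℕ :=
  max (φ (X 0)).totalDegree (φ (X 1)).totalDegree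

/-- Note on the encoding: composition of polynomial automorphisms as maps of the plane is
anti-isomorphic to multiplication of the corresponding `k`-algebra automorphisms, i.e. the
point map `β ∘ α` (first `α`, then `β`) corresponds to the algebra automorphism `α * β`.
Hence the map composition `β_l ∘ α_l ∘ ⋯ ∘ β₁ ∘ α₁` is encoded (with `0`-based indices,
`a i ↔ α_{i+1}`, `b i ↔ β_{i+1}`) as the product
`(a 0 * b 0) * (a 1 * b 1) * ⋯ * (a (l-1) * b (l-1))` of algebra automorphisms.
The degree of `β ∈ J` is the total degree of its first component. -/
theorem stmt5 (l : ℕ) (hl : 1 ≤ l)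
    (a b : Fin l → (MvPolynomial (Fin 2) k ≃ₐ[k] MvPolynomial (Fin 2) k))
    (φ : MvPolynomial (Fin 2) k ≃ₐ[k] MvPolynomial (Fin 2) k)
    (hφ : φ = (List.ofFn fun i => a i * b i).prod)
    (hbJ : ∀ i, IsJonq (b i)) (hbnA : ∀ i, ¬ IsAff (b i))
    (haA : ∀ i, IsAff (a i))
    (hanJ : ∀ i : Fin l, 1 ≤ (i : ℕ) → ¬ IsJonq (a i)) :
    (φ (X 0)).totalDegree = ∏ i, (b i (X 0)).totalDegree ∧
      (φ (X 1)).totalDegree =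
        ∏ i ∈ Finset.univ.filter (fun i : Fin l => (i : ℕ) + 1 < l),
          (b i (X 0)).totalDegree := by
  subst hφ
  obtain ⟨h0, h1, _⟩ := key l hl a b hbJ hbnA haA hanJ
  exact ⟨h0, h1⟩
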